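/- The stable set W^s = {(x,v) : x+v = ∫₀^∞ e^{−s}F(s,X(s,x,v))ds} (for X′ = V, V′ = X − F(t,X), F continuous with |F(t,y)| ≤ A e^{−t}) is invariant under the flow: if (x,v) ∈ W^s then (X(t,x,v),V(t,x,v)) ∈ W^s for all t ≥ 0, where W^s-membership of a point (x̃,ṽ) means x̃+ṽ = ∫₀^∞ e^{−s}F(t+s, X(t+s,x,v))ds with the time-shifted field. -/

import Mathlib

open MeasureTheory

/-- The Euclidean norm on `Fin n → ℝ`. -/
noncomputable def euclNorm {n : ℕ} (x : Fin n → ℝ) : ℝ := Real.sqrt (∑ i, x i ^ 2)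

lemma norm_le_euclNorm {n : ℕ} (y : Fin n → ℝ) : ‖y‖ ≤ euclNorm y := by
  rw [euclNorm]
  rw [pi_norm_le_iff_of_nonneg (Real.sqrt_nonneg _)]
  intro i
  rw [Real.norm_eq_abs, ← Real.sqrt_sq_eq_abs]
  apply Real.sqrt_le_sqrt
  exact Finset.single_le_sum (f := fun j => y j ^ 2) (fun j _ => sq_nonneg _)
    (Finset.mem_univ i)

/-- invariance of the stable set: if
`x + v = ∫₀^∞ e^{−s} F(s,X(s)) ds`, then for all `t ≥ 0`
`X(t) + V(t) = ∫₀^∞ e^{−s} F(t+s, X(t+s)) ds`. -/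
theorem stmt17 {n : ℕ} (F : ℝ → (Fin n → ℝ) → (Fin n → ℝ))
    (hF : Continuous (fun p : ℝ × (Fin n → ℝ) => F p.1 p.2))
    (A : ℝ) (hA : 0 < A)
    (hFbound : ∀ t : ℝ, 0 ≤ t → ∀ y : Fin n → ℝ, euclNorm (F t y) ≤ A * Real.exp (-t))
    (X V : ℝ → Fin n → ℝ) (x v : Fin n → ℝ)
    (hX0 : X 0 = x) (hV0 : V 0 = v)
    (hX : ∀ t : ℝ, 0 ≤ t → HasDerivAt X (V t) t)
    (hV : ∀ t : ℝ, 0 ≤ t → HasDerivAt V (X t - F t (X t)) t)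
    (hxv : x + v = ∫ s in Set.Ioi (0:ℝ), Real.exp (-s) • F s (X s)) :
    ∀ t : ℝ, 0 ≤ t →
      X t + V t = ∫ s in Set.Ioi (0:ℝ), Real.exp (-s) • F (t + s) (X (t + s)) := by
  intro t ht
  set f : ℝ → Fin n → ℝ := fun s => Real.exp (-s) • F s (X s) with hf
  -- continuity of f at nonnegative points
  have hXcont : ∀ s : ℝ, 0 ≤ s → ContinuousAt X s := fun s hs => (hX s hs).continuousAt
  have hfcont : ∀ s : ℝ, 0 ≤ s → ContinuousAt f s := by
    intro s hs
    exact ((Real.continuous_exp.comp continuous_neg).continuousAt).smul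
      (by have h := hF.continuousAt.comp ((continuousAt_id (x := s)).prodMk (hXcont s hs)); exact h)
  -- integrability of f on Ioi 0
  have hmeas : AEStronglyMeasurable f (volume.restrict (Set.Ioi (0:ℝ))) := by
    apply ContinuousOn.aestronglyMeasurable _ measurableSet_Ioi
    intro s hs
    exact (hfcont s (le_of_lt hs)).continuousWithinAt
  have hbound : ∀ s : ℝ, 0 ≤ s → ‖f s‖ ≤ A * Real.exp (-(2 * s)) := by
    intro s hs
    rw [hf]
    simp only [norm_smul, Real.norm_eq_abs, abs_of_pos (Real.exp_pos _)]
    calc Real.exp (-s) * ‖F s (X s)‖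
        ≤ Real.exp (-s) * (A * Real.exp (-s)) := by
          apply mul_le_mul_of_nonneg_left _ (le_of_lt (Real.exp_pos _))
          exact le_trans (norm_le_euclNorm _) (hFbound s hs (X s))
      _ = A * Real.exp (-(2 * s)) := by
          rw [show -(2 * s) = -s + -s by ring, Real.exp_add]; ring
  have hint : IntegrableOn f (Set.Ioi (0:ℝ)) := by
    apply Integrable.mono ((exp_neg_integrableOn_Ioi (0:ℝ) (by norm_num : (0:ℝ) < 2)).smul A) hmeas
    filter_upwards [ae_restrict_mem measurableSet_Ioi] with s hs
    calc ‖f s‖ ≤ A * Real.exp (-(2 * s)) := hbound s (le_of_lt hs)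
      _ ≤ ‖(A • fun x => Real.exp (-2 * x)) s‖ := by
          simp only [Pi.smul_apply, smul_eq_mul, Real.norm_eq_abs, neg_mul]
          exact le_abs_self _
  -- FTC: e^{-t} • (X t + V t) - (x + v) = ∫ s in 0..t, -f s
  have hg : ∀ s ∈ Set.uIcc 0 t, HasDerivAt (fun u => Real.exp (-u) • (X u + V u)) (-f s) s := by
    intro s hs
    rw [Set.uIcc_of_le ht] at hs
    have hs0 : 0 ≤ s := hs.1
    have hexp : HasDerivAt (fun u : ℝ => Real.exp (-u)) (-Real.exp (-s)) s := by
      have h := (hasDerivAt_neg s).exp; simpa using h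
    have := hexp.smul ((hX s hs0).add (hV s hs0))
    refine this.congr_deriv ?_
    rw [hf]
    simp only [Pi.add_apply]
    module
  have hdcont : ContinuousOn (fun s => -f s) (Set.uIcc 0 t) := by
    intro s hs
    rw [Set.uIcc_of_le ht] at hs
    exact ((hfcont s hs.1).neg).continuousWithinAt
  have hftc := intervalIntegral.integral_eq_sub_of_hasDerivAt hg
    (hdcont.intervalIntegrable)
  rw [intervalIntegral.integral_neg] at hftc
  simp only [hX0, hV0, neg_zero, Real.exp_zero, one_smul] at hftc
  -- split the integral
  have hsplit : (∫ s in Set.Ioi (0:ℝ), f s) =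
      (∫ s in Set.Ioc 0 t, f s) + ∫ s in Set.Ioi t, f s := by
    rw [← setIntegral_union (Set.Ioc_disjoint_Ioi le_rfl) measurableSet_Ioi
      (hint.mono_set Set.Ioc_subset_Ioi_self) (hint.mono_set (Set.Ioi_subset_Ioi ht)),
      Set.Ioc_union_Ioi_eq_Ioi ht]
  have hIoc : (∫ s in (0:ℝ)..t, f s) = ∫ s in Set.Ioc 0 t, f s :=
    intervalIntegral.integral_of_le ht
  -- so e^{-t} • (X t + V t) = ∫ s in Ioi t, f s
  have hkey : Real.exp (-t) • (X t + V t) = ∫ s in Set.Ioi t, f s := by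
    have h2 := sub_eq_iff_eq_add.mp hftc.symm
    rw [h2, hIoc, hxv, hsplit]
    abel
  -- change of variables
  have hshift : (∫ s in Set.Ioi t, f s) =
      ∫ s in Set.Ioi (0:ℝ), f (s + t) := by
    have := (measurePreserving_add_right volume t).setIntegral_preimage_emb
      (measurableEmbedding_addRight t) f (Set.Ioi t)
    rw [← this]
    congr 1
    rw [Set.preimage_add_const_Ioi, sub_self]
  have hfinal : (∫ s in Set.Ioi (0:ℝ), f (s + t)) =
      Real.exp (-t) • ∫ s in Set.Ioi (0:ℝ), Real.exp (-s) • F (t + s) (X (t + s)) := by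
    rw [← integral_smul]
    apply setIntegral_congr_fun measurableSet_Ioi
    intro s _
    rw [hf]
    simp only
    rw [smul_smul, ← Real.exp_add, add_comm s t]
    ring_nf
  have := hkey.trans (hshift.trans hfinal)
  have hne : Real.exp (-t) ≠ 0 := Real.exp_ne_zero _
  exact smul_right_injective (Fin n → ℝ) hne this
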